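/- If a simple graph G contains k pairwise duplicate vertices v₁, …, v_k (all with the same open neighborhood N, and all of common degree d), then d is an eigenvalue of L(G) of multiplicity at least k - 1. -/
import Mathlib


open Matrix

/-- If `G` contains `k` pairwise duplicate vertices (all with the same open neighborhood,
hence the same degree `d`), then `d` is a Laplacian eigenvalue of multiplicity at least
`k - 1`, i.e. the corresponding eigenspace has dimension at least `k - 1`. -/
theorem duplicate_vertices_lap_eigenvalue_multiplicity {V : Type*} [Fintype V] [DecidableEq V]
    (G : SimpleGraph V) [DecidableRel G.Adj] (k : ℕ) (hk : 0 < k)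
    (v : Fin k → V) (hinj : Function.Injective v)
    (hdup : ∀ i j, G.neighborSet (v i) = G.neighborSet (v j)) :
    k - 1 ≤ Module.finrank ℝ
      (Module.End.eigenspace (Matrix.toLin' (G.lapMatrix ℝ))
        ((G.degree (v ⟨0, hk⟩) : ℝ))) := by
  classical
  set b : V := v ⟨0, hk⟩ with hb
  set d : ℝ := (G.degree b : ℝ) with hd
  set E := Module.End.eigenspace (Matrix.toLin' (G.lapMatrix ℝ)) d with hE
  have hdeg : ∀ i : Fin k, G.degree (v i) = G.degree b := by
    intro i
    unfold SimpleGraph.degree SimpleGraph.neighborFinset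
    exact congrArg Finset.card (Set.toFinset_congr (hdup i ⟨0, hk⟩))
  have hadj : ∀ (i : Fin k) (u : V), G.Adj u (v i) ↔ G.Adj u b := by
    intro i u
    rw [G.adj_comm u (v i), G.adj_comm u b, ← SimpleGraph.mem_neighborSet,
      ← SimpleGraph.mem_neighborSet, hdup i ⟨0, hk⟩]
  -- key membership
  have key : ∀ i : Fin k, v i ≠ b →
      (Pi.single (v i) (1:ℝ) - Pi.single b 1) ∈ E := by
    intro i hne
    rw [hE, Module.End.mem_eigenspace_iff]
    have hrw : Matrix.toLin' (G.lapMatrix ℝ) (Pi.single (v i) (1:ℝ) - Pi.single b 1)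
        = (G.lapMatrix ℝ) *ᵥ (Pi.single (v i) (1:ℝ) - Pi.single b 1) := by
      simp [Matrix.toLin'_apply]
    rw [hrw]
    funext u
    rw [SimpleGraph.lapMatrix_mulVec_apply]
    have hsum : ∑ w ∈ G.neighborFinset u, (Pi.single (v i) (1:ℝ) - Pi.single b 1 : V → ℝ) w
        = (if v i ∈ G.neighborFinset u then (1:ℝ) else 0)
          - (if b ∈ G.neighborFinset u then (1:ℝ) else 0) := by
      simp only [Pi.sub_apply, Finset.sum_sub_distrib, Finset.sum_pi_single']
    have hiff : (v i ∈ G.neighborFinset u) ↔ (b ∈ G.neighborFinset u) := by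
      rw [SimpleGraph.mem_neighborFinset, SimpleGraph.mem_neighborFinset]
      exact hadj i u
    rw [hsum, if_congr hiff rfl rfl, sub_self, sub_zero, Pi.smul_apply, smul_eq_mul]
    rcases eq_or_ne u (v i) with rfl | h1
    · have hA : (Pi.single (v i) (1:ℝ) - Pi.single b 1 : V → ℝ) (v i) = 1 := by
        simp [Pi.single_eq_of_ne hne]
      rw [hA, hdeg i, hd]
    · rcases eq_or_ne u b with rfl | h2
      · have hA : (Pi.single (v i) (1:ℝ) - Pi.single b 1 : V → ℝ) b = -1 := by
          simp [Pi.single_eq_of_ne (Ne.symm hne)]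
        rw [hA, hd]
      · have hA : (Pi.single (v i) (1:ℝ) - Pi.single b 1 : V → ℝ) u = 0 := by
          simp [Pi.single_eq_of_ne h1, Pi.single_eq_of_ne h2]
        rw [hA, mul_zero, mul_zero]
  have hne : ∀ i : Fin (k-1), v ⟨i.1 + 1, by omega⟩ ≠ b := by
    intro i h
    have := hinj h
    simp [Fin.ext_iff] at this
  set f : Fin (k-1) → E := fun i =>
    ⟨Pi.single (v ⟨i.1 + 1, by omega⟩) (1:ℝ) - Pi.single b 1, key _ (hne i)⟩ with hf
  have hli : LinearIndependent ℝ f := by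
    have hli' : LinearIndependent ℝ (fun i : Fin (k-1) =>
        (Pi.single (v ⟨i.1 + 1, by omega⟩) (1:ℝ) - Pi.single b 1 : V → ℝ)) := by
      rw [Fintype.linearIndependent_iff]
      intro c hc j
      have hcj := congrFun hc (v ⟨j.1 + 1, by omega⟩)
      rw [Finset.sum_apply] at hcj
      simp only [Pi.smul_apply, Pi.sub_apply, Pi.zero_apply, smul_eq_mul] at hcj
      rw [Finset.sum_eq_single j] at hcj
      · have hb' : (Pi.single b (1:ℝ) : V → ℝ) (v ⟨j.1 + 1, by omega⟩) = 0 :=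
          Pi.single_eq_of_ne (hne j) 1
        rw [Pi.single_eq_same, hb'] at hcj
        simpa using hcj
      · intro i _ hij
        have h1 : v ⟨j.1 + 1, by omega⟩ ≠ v ⟨i.1 + 1, by omega⟩ := by
          intro h
          have := hinj h
          simp [Fin.ext_iff] at this
          exact hij (Fin.ext this.symm)
        have hb' : (Pi.single b (1:ℝ) : V → ℝ) (v ⟨j.1 + 1, by omega⟩) = 0 :=
          Pi.single_eq_of_ne (hne j) 1
        rw [Pi.single_eq_of_ne h1, hb']
        ring
      · intro h; exact absurd (Finset.mem_univ j) h
    have hcomp : E.subtype ∘ f = fun i : Fin (k-1) =>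
        (Pi.single (v ⟨i.1 + 1, by omega⟩) (1:ℝ) - Pi.single b 1 : V → ℝ) := rfl
    exact LinearIndependent.of_comp E.subtype (hcomp ▸ hli')
  have := hli.fintype_card_le_finrank
  simpa using this
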